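/- Under assumption (iv) (there exists a random variable U, taking values in a finite set, such that U is independent of Z, and for each j ∈ {0,1} the potential outcome Y(x_j) is conditionally independent of the pair (X, Z) given U), for every z ∈ {1,…,K}, every i, y, ỹ ∈ {0,1}, both inequalities hold: P(Y(x_i) = y) ≤ P(Y = y, X = i | Z = z) + P(X = 1−i | Z = z), and P(Y(x_0) = y, Y(x_1) = ỹ) ≤ P(Y = y, X = 0 | Z = z) + P(Y = ỹ, X = 1 | Z = z). -/

import Mathlib

open MeasureTheory ProbabilityTheory
open scoped ENNReal

private lemma core_arith {e p0 p1 a b d : ENNReal} (h0 : e ≤ p0) (h1 : e ≤ p1)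
    (hd : a + b = d) : e * d ≤ p0 * a + p1 * b := by
  calc e * d = e * a + e * b := by rw [← hd, mul_add]
  _ ≤ p0 * a + p1 * b := add_le_add (mul_le_mul_left h0 a) (mul_le_mul_left h1 b)

private lemma core_arith' {e p0 a b d : ENNReal} (h0 : e ≤ p0) (h1 : e ≤ 1)
    (hd : a + b = d) : e * d ≤ p0 * a + b := by
  have := core_arith h0 h1 hd
  rwa [one_mul] at this

private lemma partition_sum {Ω S : Type*} [MeasurableSpace Ω] [MeasurableSpace S]
    [MeasurableSingletonClass S] [Fintype S] (P : Measure Ω) (U : Ω → S) (hU : Measurable U)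
    (E : Set Ω) : ∑ u : S, P (U ⁻¹' {u} ∩ E) = P E := by
  have h : ∀ u : S, P (U ⁻¹' {u} ∩ E) = (P.restrict E) (U ⁻¹' {u}) := fun u =>
    (Measure.restrict_apply (hU (measurableSet_singleton u))).symm
  simp_rw [h]
  rw [sum_measure_preimage_singleton Finset.univ (fun u _ => hU (measurableSet_singleton u))]
  simp

private lemma helper {Ω S : Type*} [MeasurableSpace Ω] [MeasurableSpace S]
    [MeasurableSingletonClass S] [Fintype S] (P : Measure Ω) [IsProbabilityMeasure P]
    (U : Ω → S) (hU : Measurable U)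
    (Zs : Set Ω) (hZm : MeasurableSet Zs) (hdpos : 0 < P Zs)
    (E A B : Set Ω)
    (h : ∀ u : S, 0 < P (U ⁻¹' {u}) →
      (P[|U ⁻¹' {u}]) E * P Zs ≤ (P[|U ⁻¹' {u}]) (Zs ∩ A) + (P[|U ⁻¹' {u}]) (Zs ∩ B)) :
    (P E).toReal ≤ (P[|Zs] A).toReal + (P[|Zs] B).toReal := by
  have hd0 : P Zs ≠ 0 := hdpos.ne'
  have hdt : P Zs ≠ ∞ := measure_ne_top P Zs
  haveI : IsProbabilityMeasure (P[|Zs]) := cond_isProbabilityMeasure hd0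
  -- per-u inequality in terms of P
  have claim : ∀ u : S, P (U ⁻¹' {u} ∩ E) * P Zs ≤
      P (U ⁻¹' {u} ∩ (Zs ∩ A)) + P (U ⁻¹' {u} ∩ (Zs ∩ B)) := by
    intro u
    rcases eq_or_lt_of_le (zero_le : 0 ≤ P (U ⁻¹' {u})) with hpu | hpu
    · have h0 : P (U ⁻¹' {u} ∩ E) = 0 :=
        le_antisymm (le_trans (measure_mono Set.inter_subset_left) hpu.ge) zero_le
      simp [h0]
    · have hpu0 : P (U ⁻¹' {u}) ≠ 0 := hpu.ne'
      have hput : P (U ⁻¹' {u}) ≠ ∞ := measure_ne_top P _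
      have hQ : ∀ t : Set Ω, P (U ⁻¹' {u} ∩ t) = P (U ⁻¹' {u}) * (P[|U ⁻¹' {u}]) t := by
        intro t
        rw [cond_apply (hU (measurableSet_singleton u)) P t, ← mul_assoc,
          ENNReal.mul_inv_cancel hpu0 hput, one_mul]
      rw [hQ E, hQ (Zs ∩ A), hQ (Zs ∩ B), mul_assoc, ← mul_add]
      exact mul_le_mul_right (h u hpu) _
  have key : P E * P Zs ≤ P (Zs ∩ A) + P (Zs ∩ B) := by
    rw [← partition_sum P U hU E, ← partition_sum P U hU (Zs ∩ A),
      ← partition_sum P U hU (Zs ∩ B), Finset.sum_mul, ← Finset.sum_add_distrib]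
    exact Finset.sum_le_sum fun u _ => claim u
  have main : P E ≤ (P[|Zs]) A + (P[|Zs]) B := by
    rw [cond_apply hZm P A, cond_apply hZm P B, ← mul_add]
    have := (ENNReal.le_div_iff_mul_le (Or.inl hd0) (Or.inl hdt)).mpr key
    rwa [ENNReal.div_eq_inv_mul] at this
  rw [← ENNReal.toReal_add (measure_ne_top _ _) (measure_ne_top _ _)]
  exact ENNReal.toReal_mono (ENNReal.add_ne_top.mpr ⟨measure_ne_top _ _, measure_ne_top _ _⟩) main

/-- Under assumption (iv) (there is a random variable `U` with values in a
finite set such that `U ⟂ Z` and, for each `j ∈ {0,1}`, `Y(xⱼ) ⟂ (X, Z) | U` — the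
conditional independence is expressed elementarily, for each value `u` of `U` of positive
probability, via independence under the conditional measure `P[|U = u]`), for every
`z ∈ {1,…,K}` and all `i, y, ỹ ∈ {0,1}`, both inequalities hold:
`P(Y(xᵢ) = y) ≤ P(Y = y, X = i | Z = z) + P(X = 1−i | Z = z)`, and
`P(Y(x₀) = y, Y(x₁) = ỹ) ≤ P(Y = y, X = 0 | Z = z) + P(Y = ỹ, X = 1 | Z = z)`. -/
theorem stmt4
    {Ω : Type*} [MeasurableSpace Ω] (P : Measure Ω) [IsProbabilityMeasure P]
    (K : ℕ) (hK : 1 ≤ K)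
    (Z : Ω → Fin K) (X : Ω → Fin 2) (Y0 Y1 : Ω → Fin 2)
    (hZ : Measurable Z) (hXm : Measurable X)
    (hY0 : Measurable Y0) (hY1 : Measurable Y1)
    (Y : Ω → Fin 2) (hY : ∀ ω, Y ω = if X ω = 0 then Y0 ω else Y1 ω)
    (hpos : ∀ z, 0 < P (Z ⁻¹' {z}))
    (S : Type*) [MeasurableSpace S] [MeasurableSingletonClass S] [Finite S]
    (U : Ω → S) (hU : Measurable U)
    (hUZ : IndepFun U Z P)
    (hcondindep : ∀ (j : Fin 2) (u : S), 0 < P (U ⁻¹' {u}) →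
      IndepFun (if j = 0 then Y0 else Y1) (fun ω => (X ω, Z ω)) (P[|U ⁻¹' {u}])) :
    ∀ (z : Fin K) (i y ytilde : Fin 2),
      ((P {ω | (if i = 0 then Y0 ω else Y1 ω) = y}).toReal ≤
        (P[|Z ⁻¹' {z}] {ω | Y ω = y ∧ X ω = i}).toReal +
          (P[|Z ⁻¹' {z}] {ω | X ω = 1 - i}).toReal) ∧
      ((P {ω | Y0 ω = y ∧ Y1 ω = ytilde}).toReal ≤
        (P[|Z ⁻¹' {z}] {ω | Y ω = y ∧ X ω = 0}).toReal +
          (P[|Z ⁻¹' {z}] {ω | Y ω = ytilde ∧ X ω = 1}).toReal) := by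
  haveI := Fintype.ofFinite S
  intro z i y ytilde
  have hZm : MeasurableSet (Z ⁻¹' {z}) := hZ (measurableSet_singleton z)
  set W : Ω → Fin 2 × Fin K := fun ω => (X ω, Z ω) with hWdef
  have hW : Measurable W := hXm.prodMk hZ
  have hx2 : ∀ x : Fin 2, x = 0 ∨ x = 1 := by decide
  -- common facts under each conditional measure
  have hQZ : ∀ u : S, 0 < P (U ⁻¹' {u}) →
      (P[|U ⁻¹' {u}]) (Z ⁻¹' {z}) = P (Z ⁻¹' {z}) := by
    intro u hpu
    rw [cond_apply (hU (measurableSet_singleton u)) P,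
      hUZ.measure_inter_preimage_eq_mul {u} {z} (measurableSet_singleton u)
        (measurableSet_singleton z), ← mul_assoc,
      ENNReal.inv_mul_cancel hpu.ne' (measure_ne_top P _), one_mul]
  have hsplit : ∀ u : S, 0 < P (U ⁻¹' {u}) →
      (P[|U ⁻¹' {u}]) (W ⁻¹' {(0, z)}) + (P[|U ⁻¹' {u}]) (W ⁻¹' {(1, z)}) =
        (P[|U ⁻¹' {u}]) (Z ⁻¹' {z}) := by
    intro u hpu
    have hunion : W ⁻¹' {(0, z)} ∪ W ⁻¹' {(1, z)} = Z ⁻¹' {z} := by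
      ext ω
      simp only [Set.mem_union, Set.mem_preimage, Set.mem_singleton_iff, Prod.ext_iff, hWdef]
      rcases hx2 (X ω) with h | h <;> simp [h]
    have hdisj : Disjoint (W ⁻¹' {(0, z)}) (W ⁻¹' {(1, z)}) := by
      rw [Set.disjoint_left]
      intro ω h1 h2
      simp only [Set.mem_preimage, Set.mem_singleton_iff, Prod.ext_iff, hWdef] at h1 h2
      rw [h1.1] at h2
      exact absurd h2.1 (by decide)
    rw [← hunion, measure_union hdisj (hW (measurableSet_singleton _))]
  have hind : ∀ (j : Fin 2) (u : S) (hpu : 0 < P (U ⁻¹' {u})) (v : Fin 2) (x : Fin 2),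
      (P[|U ⁻¹' {u}]) ((if j = 0 then Y0 else Y1) ⁻¹' {v} ∩ W ⁻¹' {(x, z)}) =
        (P[|U ⁻¹' {u}]) ((if j = 0 then Y0 else Y1) ⁻¹' {v}) *
          (P[|U ⁻¹' {u}]) (W ⁻¹' {(x, z)}) := fun j u hpu v x =>
    (hcondindep j u hpu).measure_inter_preimage_eq_mul {v} {(x, z)}
      (measurableSet_singleton v) (measurableSet_singleton _)
  have hind0 : ∀ (u : S) (hpu : 0 < P (U ⁻¹' {u})) (v x : Fin 2),
      (P[|U ⁻¹' {u}]) (Y0 ⁻¹' {v} ∩ W ⁻¹' {(x, z)}) =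
        (P[|U ⁻¹' {u}]) (Y0 ⁻¹' {v}) * (P[|U ⁻¹' {u}]) (W ⁻¹' {(x, z)}) := by
    intro u hpu v x
    have := hind 0 u hpu v x
    simpa using this
  have hind1 : ∀ (u : S) (hpu : 0 < P (U ⁻¹' {u})) (v x : Fin 2),
      (P[|U ⁻¹' {u}]) (Y1 ⁻¹' {v} ∩ W ⁻¹' {(x, z)}) =
        (P[|U ⁻¹' {u}]) (Y1 ⁻¹' {v}) * (P[|U ⁻¹' {u}]) (W ⁻¹' {(x, z)}) := by
    intro u hpu v x
    have := hind 1 u hpu v x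
    simpa using this
  -- event identities
  have hA0 : ∀ v : Fin 2, Z ⁻¹' {z} ∩ {ω | Y ω = v ∧ X ω = 0} =
      Y0 ⁻¹' {v} ∩ W ⁻¹' {(0, z)} := by
    intro v
    ext ω
    simp only [Set.mem_inter_iff, Set.mem_preimage, Set.mem_singleton_iff, Set.mem_setOf_eq,
      Prod.ext_iff, hY ω, hWdef]
    rcases hx2 (X ω) with h | h <;> simp [h] <;> tauto
  have hA1 : ∀ v : Fin 2, Z ⁻¹' {z} ∩ {ω | Y ω = v ∧ X ω = 1} =
      Y1 ⁻¹' {v} ∩ W ⁻¹' {(1, z)} := by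
    intro v
    ext ω
    simp only [Set.mem_inter_iff, Set.mem_preimage, Set.mem_singleton_iff, Set.mem_setOf_eq,
      Prod.ext_iff, hY ω, hWdef]
    rcases hx2 (X ω) with h | h <;> simp [h] <;> tauto
  have hB0 : Z ⁻¹' {z} ∩ {ω | X ω = 0} = W ⁻¹' {(0, z)} := by
    ext ω
    simp only [Set.mem_inter_iff, Set.mem_preimage, Set.mem_singleton_iff, Set.mem_setOf_eq,
      Prod.ext_iff, hWdef]
    tauto
  have hB1 : Z ⁻¹' {z} ∩ {ω | X ω = 1} = W ⁻¹' {(1, z)} := by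
    ext ω
    simp only [Set.mem_inter_iff, Set.mem_preimage, Set.mem_singleton_iff, Set.mem_setOf_eq,
      Prod.ext_iff, hWdef]
    tauto
  constructor
  · -- first inequality
    apply helper P U hU (Z ⁻¹' {z}) hZm (hpos z)
    intro u hpu
    haveI : IsProbabilityMeasure (P[|U ⁻¹' {u}]) := cond_isProbabilityMeasure hpu.ne'
    rcases hx2 i with hi | hi <;> subst hi
    · -- i = 0
      have hE : {ω | (if (0 : Fin 2) = 0 then Y0 ω else Y1 ω) = y} = Y0 ⁻¹' {y} := by
        ext ω; simp
      have h1i : (1 - 0 : Fin 2) = 1 := by decide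
      rw [hE, h1i, hA0 y, hB1, hind0 u hpu y 0, ← hQZ u hpu, ← hsplit u hpu]
      exact core_arith' le_rfl prob_le_one rfl
    · -- i = 1
      have hE : {ω | (if (1 : Fin 2) = 0 then Y0 ω else Y1 ω) = y} = Y1 ⁻¹' {y} := by
        ext ω; simp
      have h1i : (1 - 1 : Fin 2) = 0 := by decide
      have hsplit' : (P[|U ⁻¹' {u}]) (W ⁻¹' {(1, z)}) + (P[|U ⁻¹' {u}]) (W ⁻¹' {(0, z)}) =
          (P[|U ⁻¹' {u}]) (Z ⁻¹' {z}) := by rw [add_comm]; exact hsplit u hpu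
      rw [hE, h1i, hA1 y, hB0, hind1 u hpu y 1, ← hQZ u hpu, ← hsplit']
      exact core_arith' le_rfl prob_le_one rfl
  · -- second inequality
    apply helper P U hU (Z ⁻¹' {z}) hZm (hpos z)
    intro u hpu
    haveI : IsProbabilityMeasure (P[|U ⁻¹' {u}]) := cond_isProbabilityMeasure hpu.ne'
    rw [hA0 y, hA1 ytilde, hind0 u hpu y 0, hind1 u hpu ytilde 1, ← hQZ u hpu, ← hsplit u hpu]
    refine core_arith ?_ ?_ rfl
    · exact measure_mono fun ω hω => hω.1
    · exact measure_mono fun ω hω => hω.2
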